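/- Let N be a project network and let X be a k-crashing plan of N for some k ≥ 1. Then X contains a cut of the critical graph N*, i.e., there is a cut of N* all of whose edges e satisfy x_e ≥ 1. -/

import Mathlib

noncomputable section
open scoped Classical
open Finset

/-- A project network: a finite DAG (witnessed by a rank function) with a single
source `s` and a single sink `t`; each edge `e` carries a minimum length `a e`,
a normal length `b e`, and a nonnegative cost slope `c e`. -/
structure Project where
  V : Type
  E : Type
  [instFV : Fintype V]
  [instDV : DecidableEq V]
  [instFE : Fintype E]
  [instDE : DecidableEq E]
  src : E → V
  dst : E → V
  s : V
  t : V
  a : E → ℤ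
  b : E → ℤ
  c : E → ℝ
  length_lb : ∀ e, a e ≤ b e
  cost_nonneg : ∀ e, 0 ≤ c e
  rank : V → ℕ
  acyclic : ∀ e, rank (src e) < rank (dst e)
  s_no_in : ∀ e, dst e ≠ s
  t_no_out : ∀ e, src e ≠ t
  source_unique : ∀ v, v ≠ s → ∃ e, dst e = v
  sink_unique : ∀ v, v ≠ t → ∃ e, src e = v

attribute [instance] Project.instFV Project.instDV Project.instFE Project.instDE

namespace Project

/-- A network state: a subset of the edges together with current edge lengths. -/
structure State (P : Project) where
  edges : Finset P.E
  len : P.E → ℤ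

variable (P : Project)

/-- `es` is a directed path from the source `s` to the sink `t` using edges of `H`. -/
def IsPath (H : State P) (es : List P.E) : Prop :=
  es ≠ [] ∧ (∀ e ∈ es, e ∈ H.edges) ∧
  List.Chain' (fun e f => P.dst e = P.src f) es ∧
  (∀ e ∈ es.head?, P.src e = P.s) ∧ (∀ e ∈ es.getLast?, P.dst e = P.t)

/-- The length of a path in state `H`. -/
def pathLen (H : State P) (es : List P.E) : ℤ := (es.map H.len).sum

/-- The duration of `H`: the maximum total length of a directed `s`-`t` path. -/
def duration (H : State P) : ℤ :=
  sSup {L : ℤ | ∃ es, IsPath P H es ∧ pathLen P H es = L}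

/-- The critical graph `H*`: the edges of `H` lying on some maximum-length path. -/
def critical (H : State P) : State P :=
  ⟨H.edges.filter (fun e => ∃ es, IsPath P H es ∧ pathLen P H es = duration P H ∧ e ∈ es),
   H.len⟩

/-- An accelerate plan is feasible if each edge is shortened by at most `b e - a e`. -/
def Feasible (X : P.E → ℕ) : Prop := ∀ e, (X e : ℤ) ≤ P.b e - P.a e

/-- The original network `N` (all edges, with their normal lengths). -/
def base : State P := ⟨Finset.univ, P.b⟩

/-- The accelerated network `N(X)`, whose edge lengths are `b e - X e`. -/
def applyPlan (X : P.E → ℕ) : State P := ⟨Finset.univ, fun e => P.b e - X e⟩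

/-- The cost of a plan: `∑ e, c e * x e`. -/
def cost (X : P.E → ℕ) : ℝ := ∑ e, P.c e * (X e : ℝ)

/-- The cost of a set of edges: the sum of their cost slopes. -/
def costSet (C : Finset P.E) : ℝ := ∑ e ∈ C, P.c e

/-- `X` is a `k`-crashing plan of `N`: it is feasible and shortens the duration by `k`. -/
def Crashing (k : ℤ) (X : P.E → ℕ) : Prop :=
  Feasible P X ∧ duration P (applyPlan P X) ≤ duration P (base P) - k

/-- The plan shortening every edge maximally. -/
def fullPlan : P.E → ℕ := fun e => (P.b e - P.a e).toNat

/-- `k_max = d(N) - d(N(X_full))`. -/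
def kmax : ℤ := duration P (base P) - duration P (applyPlan P (fullPlan P))

/-- `C` is the cut of `H` determined by the vertex partition `(S, Sᶜ)` with `s ∈ S`, `t ∉ S`. -/
def IsCutWith (H : State P) (S : Finset P.V) (C : Finset P.E) : Prop :=
  P.s ∈ S ∧ P.t ∉ S ∧ C = H.edges.filter (fun e => P.src e ∈ S ∧ P.dst e ∉ S)

/-- `C` is a cut of `H`. -/
def IsCut (H : State P) (C : Finset P.E) : Prop := ∃ S, IsCutWith P H S C

/-- The plan `X` contains a cut of `H` (some cut lies inside the support of `X`). -/
def PlanContainsCut (H : State P) (X : P.E → ℕ) : Prop :=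
  ∃ C, IsCut P H C ∧ ∀ e ∈ C, 1 ≤ X e

/-- The edge set `D` contains a cut of `H`. -/
def ContainsCut (H : State P) (D : Finset P.E) : Prop :=
  ∃ C, IsCut P H C ∧ C ⊆ D

/-- `C = mincut(H, X)`: a minimum-cost cut of `H` among all cuts contained in `X`. -/
def IsMinCutIn (H : State P) (X : P.E → ℕ) (C : Finset P.E) : Prop :=
  IsCut P H C ∧ (∀ e ∈ C, 1 ≤ X e) ∧
  ∀ C', IsCut P H C' → (∀ e ∈ C', 1 ≤ X e) → costSet P C ≤ costSet P C'

/-- `H(C)`: the state `H` with every edge of `C` shortened by `1`. -/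
def shorten (H : State P) (C : Finset P.E) : State P :=
  ⟨H.edges, fun e => H.len e - if e ∈ C then 1 else 0⟩

/-- The decomposition `N_i, X_i, C_i` associated to a `k`-crashing plan `X`:
`N_1 = N`, `X_1 = X`, `C_i = mincut(N_i*, X_i)`, and for `1 < i ≤ k`,
`N_i = N_{i-1}*(C_{i-1})` and `X_i = X_{i-1} ∖ C_{i-1}`. -/
def Decomp (X : P.E → ℕ) (k : ℕ) (Ns : ℕ → State P) (Xs : ℕ → P.E → ℕ)
    (Cs : ℕ → Finset P.E) : Prop :=
  Ns 1 = base P ∧ Xs 1 = X ∧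
  (∀ i, 1 ≤ i → i ≤ k → IsMinCutIn P (critical P (Ns i)) (Xs i) (Cs i)) ∧
  ∀ i, 1 < i → i ≤ k →
    Ns i = shorten P (critical P (Ns (i - 1))) (Cs (i - 1)) ∧
    Xs i = fun e => Xs (i - 1) e - if e ∈ Cs (i - 1) then 1 else 0

/-- The edges of `H` within the vertex set `S`. -/
def withinEdges (H : State P) (S : Finset P.V) : Finset P.E :=
  H.edges.filter (fun e => P.src e ∈ S ∧ P.dst e ∈ S)

/-- The edges of `H` within the complement of the vertex set `S`. -/
def outsideEdges (H : State P) (S : Finset P.V) : Finset P.E :=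
  H.edges.filter (fun e => P.src e ∉ S ∧ P.dst e ∉ S)

/-- The edges of `H` going from the complement of `S` back into `S`. -/
def reverseCut (H : State P) (S : Finset P.V) : Finset P.E :=
  H.edges.filter (fun e => P.src e ∉ S ∧ P.dst e ∈ S)

/-- `Z` is an `m`-crashing plan of the accelerated network `N(Y)`. -/
def CrashesBy (Y Z : P.E → ℕ) (m : ℤ) : Prop :=
  Feasible P (fun e => Y e + Z e) ∧
  duration P (applyPlan P (fun e => Y e + Z e)) ≤ duration P (applyPlan P Y) - m

/-- `Z` is a minimum-cost `1`-crashing plan of the accelerated network `N(Y)`. -/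
def MinOneCrashOf (Y Z : P.E → ℕ) : Prop :=
  CrashesBy P Y Z 1 ∧ ∀ Z', CrashesBy P Y Z' 1 → cost P Z ≤ cost P Z'

end Project

section Aux

open Project

variable (P : Project)

/-- A walk from `u` to `v`: a chain of consecutive edges; empty only if `u = v`. -/
def PW (u v : P.V) (es : List P.E) : Prop :=
  List.Chain' (fun e f => P.dst e = P.src f) es ∧
  (∀ e ∈ es.head?, P.src e = u) ∧ (∀ e ∈ es.getLast?, P.dst e = v) ∧ (es = [] → u = v)

lemma pw_nil (u : P.V) : PW P u u [] := by
  refine ⟨List.isChain_nil, ?_, ?_, fun _ => rfl⟩ <;> simp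

lemma pw_snoc {u v : P.V} {w : List P.E} {e : P.E} (h : PW P u v w) (he : P.src e = v) :
    PW P u (P.dst e) (w ++ [e]) := by
  obtain ⟨hc, hh, hl, hn⟩ := h
  refine ⟨hc.append (List.isChain_singleton e) ?_, ?_, ?_, by simp⟩
  · intro x hx y hy
    simp at hy; subst hy
    rw [hl x hx, he]
  · intro f hf
    cases w with
    | nil => simp at hf; subst hf; rw [he, hn rfl]
    | cons a as => simp at hf; subst hf; exact hh a rfl
  · intro f hf
    rw [List.getLast?_append_cons] at hf
    simp at hf; subst hf; rfl

lemma pw_cons {v : P.V} {w : List P.E} {e : P.E} (h : PW P (P.dst e) v w) :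
    PW P (P.src e) v (e :: w) := by
  obtain ⟨hc, hh, hl, hn⟩ := h
  refine ⟨?_, ?_, ?_, by simp⟩
  · cases w with
    | nil => exact List.isChain_singleton e
    | cons a as => exact List.isChain_cons_cons.2 ⟨(hh a rfl).symm, hc⟩
  · intro f hf; simp at hf; subst hf; rfl
  · intro f hf
    cases w with
    | nil => simp at hf; subst hf; exact hn rfl
    | cons a as =>
      rw [List.getLast?_cons_cons] at hf
      exact hl f hf

lemma pw_append {u v x : P.V} {w1 w2 : List P.E} (h1 : PW P u v w1) (h2 : PW P v x w2) :
    PW P u x (w1 ++ w2) := by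
  obtain ⟨hc1, hh1, hl1, hn1⟩ := h1
  obtain ⟨hc2, hh2, hl2, hn2⟩ := h2
  refine ⟨hc1.append hc2 ?_, ?_, ?_, ?_⟩
  · intro a ha b hb
    rw [hl1 a ha, hh2 b hb]
  · intro f hf
    cases w1 with
    | nil => exact (hn1 rfl) ▸ hh2 f hf
    | cons a as => simp at hf; subst hf; exact hh1 a rfl
  · intro f hf
    cases w2 with
    | nil => rw [List.append_nil] at hf; exact (hn2 rfl) ▸ hl1 f hf
    | cons a as =>
      rw [List.getLast?_append_cons] at hf
      exact hl2 f hf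
  · intro h
    rcases List.append_eq_nil_iff.1 h with ⟨e1, e2⟩
    exact (hn1 e1).trans (hn2 e2)

/-- Every vertex is reachable from the source. -/
lemma pw_from_s (v : P.V) : ∃ es, PW P P.s v es := by
  have H : ∀ n (v : P.V), P.rank v ≤ n → ∃ es, PW P P.s v es := by
    intro n
    induction n with
    | zero =>
      intro v hv
      by_cases h : v = P.s
      · subst h; exact ⟨[], pw_nil P _⟩
      · obtain ⟨e, he⟩ := P.source_unique v h
        have hr := P.acyclic e
        rw [he] at hr
        omega
    | succ n ih =>
      intro v hv
      by_cases h : v = P.s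
      · subst h; exact ⟨[], pw_nil P _⟩
      · obtain ⟨e, he⟩ := P.source_unique v h
        have hr := P.acyclic e
        rw [he] at hr
        obtain ⟨w, hw⟩ := ih (P.src e) (by omega)
        exact ⟨w ++ [e], he ▸ pw_snoc P hw rfl⟩
  exact H (P.rank v) v le_rfl

/-- Every vertex reaches the sink. -/
lemma pw_to_t (v : P.V) : ∃ es, PW P v P.t es := by
  have H : ∀ n (v : P.V), Finset.univ.sup P.rank - P.rank v ≤ n → ∃ es, PW P v P.t es := by
    intro n
    induction n with
    | zero =>
      intro v hv
      by_cases h : v = P.t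
      · subst h; exact ⟨[], pw_nil P _⟩
      · obtain ⟨e, he⟩ := P.sink_unique v h
        have hr := P.acyclic e
        have hle : P.rank (P.dst e) ≤ Finset.univ.sup P.rank := Finset.le_sup (Finset.mem_univ _)
        rw [he] at hr
        omega
    | succ n ih =>
      intro v hv
      by_cases h : v = P.t
      · subst h; exact ⟨[], pw_nil P _⟩
      · obtain ⟨e, he⟩ := P.sink_unique v h
        have hr := P.acyclic e
        have hle : P.rank (P.dst e) ≤ Finset.univ.sup P.rank := Finset.le_sup (Finset.mem_univ _)
        rw [he] at hr
        obtain ⟨w, hw⟩ := ih (P.dst e) (by omega)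
        exact ⟨e :: w, he ▸ pw_cons P hw⟩
  exact H _ v le_rfl

/-- A chain of edges in a DAG has no duplicates. -/
lemma chain_nodup {es : List P.E} (h : List.Chain' (fun e f => P.dst e = P.src f) es) :
    es.Nodup := by
  have h2 : List.Chain' (· < ·) (es.map (fun e => P.rank (P.src e))) := by
    refine (List.isChain_map _).2 ?_
    refine h.imp ?_
    intro a b hab
    have := P.acyclic a
    rw [hab] at this
    exact this
  have h3 : (es.map (fun e => P.rank (P.src e))).Pairwise (· < ·) :=
    List.isChain_iff_pairwise.1 h2
  exact List.Nodup.of_map _ (h3.imp fun h => ne_of_lt h)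

lemma pathLen_bound (H : State P) {es : List P.E}
    (h : List.Chain' (fun e f => P.dst e = P.src f) es) :
    pathLen P H es ≤ ∑ e, max (H.len e) 0 := by
  have hn := chain_nodup P h
  have heq : pathLen P H es = ∑ e ∈ es.toFinset, H.len e := by
    rw [pathLen, ← List.sum_toFinset _ hn]
  rw [heq]
  calc ∑ e ∈ es.toFinset, H.len e ≤ ∑ e ∈ es.toFinset, max (H.len e) 0 :=
        Finset.sum_le_sum fun e _ => le_max_left _ _
    _ ≤ ∑ e, max (H.len e) 0 :=
        Finset.sum_le_sum_of_subset_of_nonneg (Finset.subset_univ _)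
          (fun e _ _ => le_max_right _ _)

/-- The set of walk lengths between two vertices (in the base network). -/
def dset (u v : P.V) : Set ℤ := {L | ∃ es, PW P u v es ∧ pathLen P (base P) es = L}

lemma dset_bdd (u v : P.V) : BddAbove (dset P u v) := by
  refine ⟨∑ e, max ((base P).len e) 0, ?_⟩
  rintro L ⟨es, hes, rfl⟩
  exact pathLen_bound P _ hes.1

lemma dset_s_nonempty (v : P.V) : (dset P P.s v).Nonempty := by
  obtain ⟨es, hes⟩ := pw_from_s P v
  exact ⟨_, es, hes, rfl⟩

lemma dset_t_nonempty (v : P.V) : (dset P v P.t).Nonempty := by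
  obtain ⟨es, hes⟩ := pw_to_t P v
  exact ⟨_, es, hes, rfl⟩

/-- Maximum length of a walk from the source to `v`. -/
def dpl (v : P.V) : ℤ := sSup (dset P P.s v)

/-- Maximum length of a walk from `v` to the sink. -/
def dml (v : P.V) : ℤ := sSup (dset P v P.t)

lemma dur_bdd (H : State P) :
    BddAbove {L : ℤ | ∃ es, IsPath P H es ∧ pathLen P H es = L} := by
  refine ⟨∑ e, max (H.len e) 0, ?_⟩
  rintro L ⟨es, hes, rfl⟩
  exact pathLen_bound P _ hes.2.2.1

lemma le_dur (H : State P) {es : List P.E} (h : IsPath P H es) :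
    pathLen P H es ≤ duration P H :=
  le_csSup (dur_bdd P H) ⟨es, h, rfl⟩

lemma pathLen_append (H : State P) (w1 w2 : List P.E) :
    pathLen P H (w1 ++ w2) = pathLen P H w1 + pathLen P H w2 := by
  simp [pathLen]

lemma pathLen_cons (H : State P) (e : P.E) (es : List P.E) :
    pathLen P H (e :: es) = H.len e + pathLen P H es := by
  simp [pathLen]

lemma base_len : (base P).len = P.b := rfl

/-- A nonempty walk from `s` to `t` is a path of the base network. -/
lemma pw_isPath {es : List P.E} (h : PW P P.s P.t es) (hne : es ≠ []) :
    IsPath P (base P) es :=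
  ⟨hne, fun e _ => Finset.mem_univ e, h.1, h.2.1, h.2.2.1⟩

lemma dpl_s : dpl P P.s = 0 := by
  have hset : dset P P.s P.s = {0} := by
    ext L
    constructor
    · rintro ⟨es, hes, rfl⟩
      cases es with
      | nil => simp [pathLen]
      | cons a as =>
        exfalso
        have hl : (a :: as).getLast? = some ((a :: as).getLast (by simp)) :=
          List.getLast?_eq_getLast_of_ne_nil _
        exact P.s_no_in _ (hes.2.2.1 _ (by rw [hl]; rfl))
    · rintro rfl
      exact ⟨[], pw_nil P _, rfl⟩
  rw [dpl, hset, csSup_singleton]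

/-- For any vertex `v ≠ s`, `dpl v + dml v ≤ d(N)`. -/
lemma dpl_add_dml_le {v : P.V} (hv : v ≠ P.s) :
    dpl P v + dml P v ≤ duration P (base P) := by
  rw [← le_sub_iff_add_le, dpl]
  apply csSup_le (dset_s_nonempty P v)
  rintro L ⟨w1, h1, rfl⟩
  rw [le_sub_iff_add_le, add_comm, ← le_sub_iff_add_le, dml]
  apply csSup_le (dset_t_nonempty P v)
  rintro M ⟨w2, h2, rfl⟩
  rw [le_sub_iff_add_le, add_comm]
  have hne : w1 ≠ [] := fun h => hv ((h1.2.2.2 h).symm)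
  have hp : IsPath P (base P) (w1 ++ w2) :=
    pw_isPath P (pw_append P h1 h2) (by simp [hne])
  have hd := le_dur P (base P) hp
  rwa [pathLen_append] at hd

/-- `dpl` increases at least by the edge length along any edge. -/
lemma dpl_edge (e : P.E) : dpl P (P.src e) + P.b e ≤ dpl P (P.dst e) := by
  rw [← le_sub_iff_add_le, dpl]
  apply csSup_le (dset_s_nonempty P _)
  rintro L ⟨w1, h1, rfl⟩
  rw [le_sub_iff_add_le]
  apply le_csSup (dset_bdd P _ _)
  refine ⟨w1 ++ [e], pw_snoc P h1 rfl, ?_⟩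
  rw [pathLen_append, pathLen_cons]
  show _ + ((base P).len e + 0) = _
  rw [base_len]
  ring

/-- For a critical edge, `d(N) ≤ dpl(src e) + b e + dml(dst e)`. -/
lemma crit_ge {e : P.E} (he : e ∈ (critical P (base P)).edges) :
    duration P (base P) ≤ dpl P (P.src e) + P.b e + dml P (P.dst e) := by
  rw [critical, Finset.mem_filter] at he
  obtain ⟨-, es, hp, hlen, hmem⟩ := he
  obtain ⟨p1, p2, rfl⟩ := List.append_of_mem hmem
  obtain ⟨hne, hE, hc, hh, hl⟩ := hp
  replace hc := List.isChain_append.1 hc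
  obtain ⟨hc1, hc2, hjun⟩ := hc
  have h1 : PW P P.s (P.src e) p1 := by
    refine ⟨hc1, ?_, ?_, ?_⟩
    · intro f hf
      apply hh
      cases p1 with
      | nil => simp at hf
      | cons a as => simp at hf; subst hf; rfl
    · intro f hf
      exact hjun f hf e rfl
    · intro h
      subst h
      exact (hh e rfl).symm
  have h2 : PW P (P.dst e) P.t p2 := by
    have hc2' := List.isChain_cons.1 hc2
    refine ⟨hc2'.2, fun f hf => (hc2'.1 f hf).symm, ?_, ?_⟩
    · intro f hf
      apply hl
      rw [List.getLast?_append_cons]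
      cases p2 with
      | nil => simp at hf
      | cons a as => rw [List.getLast?_cons_cons]; exact hf
    · intro h
      subst h
      apply hl
      rw [List.getLast?_append_cons]
      rfl
  have e1 : pathLen P (base P) p1 ≤ dpl P (P.src e) :=
    le_csSup (dset_bdd P _ _) ⟨p1, h1, rfl⟩
  have e2 : pathLen P (base P) p2 ≤ dml P (P.dst e) :=
    le_csSup (dset_bdd P _ _) ⟨p2, h2, rfl⟩
  have hsplit : pathLen P (base P) (p1 ++ e :: p2)
      = pathLen P (base P) p1 + P.b e + pathLen P (base P) p2 := by
    rw [pathLen_append, pathLen_cons, base_len]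
    ring
  rw [← hlen, hsplit]
  linarith

/-- Key equality: along a critical edge, `dpl` increases by exactly the edge length. -/
lemma dpl_crit {e : P.E} (he : e ∈ (critical P (base P)).edges) :
    dpl P (P.dst e) = dpl P (P.src e) + P.b e := by
  have h1 := dpl_edge P e
  have h2 := crit_ge P he
  have h3 : dpl P (P.dst e) + dml P (P.dst e) ≤ duration P (base P) :=
    dpl_add_dml_le P (P.s_no_in e)
  linarith

/-- Telescoping: a path of critical edges has length `dpl(end) - dpl(start)`. -/
lemma telescope : ∀ (es : List P.E) (e : P.E),
    List.Chain' (fun e f => P.dst e = P.src f) (e :: es) →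
    (∀ f ∈ e :: es, f ∈ (critical P (base P)).edges) →
    ∀ l ∈ (e :: es).getLast?,
    pathLen P (base P) (e :: es) = dpl P (P.dst l) - dpl P (P.src e) := by
  intro es
  induction es with
  | nil =>
    intro e _ hcrit l hl
    simp at hl
    subst hl
    have hkey := dpl_crit P (hcrit e (by simp))
    rw [pathLen_cons]
    show (base P).len e + 0 = _
    rw [base_len, hkey]
    ring
  | cons f es ih =>
    intro e hch hcrit l hl
    rw [List.getLast?_cons_cons] at hl
    have hch' := List.isChain_cons_cons.1 hch
    have ihv := ih f hch'.2 (fun g hg => hcrit g (by simp at hg ⊢; tauto)) l hl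
    have hkey := dpl_crit P (hcrit e (by simp))
    have hsd : P.dst e = P.src f := hch'.1
    rw [pathLen_cons, ihv, ← hsd, base_len, hkey]
    ring

lemma dpl_t (hst : P.s ≠ P.t) : dpl P P.t = duration P (base P) := by
  have hset : dset P P.s P.t
      = {L : ℤ | ∃ es, IsPath P (base P) es ∧ pathLen P (base P) es = L} := by
    ext L
    constructor
    · rintro ⟨es, hes, rfl⟩
      have hne : es ≠ [] := fun h => hst (hes.2.2.2 h)
      exact ⟨es, pw_isPath P hes hne, rfl⟩
    · rintro ⟨es, hes, rfl⟩
      exact ⟨es, ⟨hes.2.2.1, hes.2.2.2.1, hes.2.2.2.2, fun h => absurd h hes.1⟩, rfl⟩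
  rw [dpl, hset, duration]

lemma dur_eq_zero (hst : P.s = P.t) (H : State P) : duration P H = 0 := by
  rw [duration]
  convert Int.csSup_empty using 2
  · rfl
  rw [Set.eq_empty_iff_forall_notMem]
  rintro L ⟨es, ⟨hne, _, _, hh, _⟩, -⟩
  cases es with
  | nil => exact hne rfl
  | cons a as => exact P.t_no_out a (hst ▸ hh a rfl)

end Aux

/-- a `k`-crashing plan `X` (`k ≥ 1`) contains a cut of the critical
graph `N*`. -/
theorem kCrashing_contains_cut (P : Project) (k : ℤ) (hk : 1 ≤ k)
    (X : P.E → ℕ) (hX : Project.Crashing P k X) :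
    Project.PlanContainsCut P (Project.critical P (Project.base P)) X := by
  obtain ⟨hfeas, hdur⟩ := hX
  by_cases hst : P.s = P.t
  · exfalso
    rw [dur_eq_zero P hst, dur_eq_zero P hst] at hdur
    linarith
  · set Reach : P.V → Prop := fun v =>
      ∃ es, PW P P.s v es ∧ ∀ e ∈ es, e ∈ (Project.critical P (Project.base P)).edges ∧ X e = 0
      with hReach
    by_cases hRt : Reach P.t
    · exfalso
      obtain ⟨es, hpw, hz⟩ := hRt
      cases es with
      | nil => exact hst (hpw.2.2.2 rfl)
      | cons e es' =>
        obtain hl : (e :: es').getLast? = some ((e :: es').getLast (by simp)) :=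
          List.getLast?_eq_getLast_of_ne_nil _
        have htel := telescope P es' e hpw.1 (fun f hf => (hz f hf).1)
          ((e :: es').getLast (by simp)) (by rw [hl]; rfl)
        have hdstl : P.dst ((e :: es').getLast (by simp)) = P.t :=
          hpw.2.2.1 _ (by rw [hl]; rfl)
        have hsrce : P.src e = P.s := hpw.2.1 e rfl
        rw [hdstl, hsrce, dpl_t P hst, dpl_s P] at htel
        have hmap : Project.pathLen P (Project.applyPlan P X) (e :: es')
            = Project.pathLen P (Project.base P) (e :: es') := by
          unfold Project.pathLen
          congr 1
          apply List.map_congr_left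
          intro f hf
          have hz0 := (hz f hf).2
          show P.b f - (X f : ℤ) = P.b f
          rw [hz0]
          simp
        have hip : Project.IsPath P (Project.applyPlan P X) (e :: es') :=
          ⟨by simp, fun f _ => Finset.mem_univ f, hpw.1, hpw.2.1, hpw.2.2.1⟩
        have hge := le_dur P (Project.applyPlan P X) hip
        rw [hmap, htel] at hge
        linarith
    · refine ⟨(Project.critical P (Project.base P)).edges.filter
        (fun e => P.src e ∈ Finset.univ.filter Reach ∧ P.dst e ∉ Finset.univ.filter Reach),
        ⟨Finset.univ.filter Reach, ?_, ?_, rfl⟩, ?_⟩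
      · rw [Finset.mem_filter]
        exact ⟨Finset.mem_univ _, ⟨[], pw_nil P _, by simp⟩⟩
      · rw [Finset.mem_filter]
        rintro ⟨-, h⟩
        exact hRt h
      · intro e hmem
        rw [Finset.mem_filter] at hmem
        obtain ⟨hcrit, hsrc, hdst⟩ := hmem
        by_contra hx
        have hx0 : X e = 0 := by omega
        rw [Finset.mem_filter] at hsrc
        obtain ⟨w, hw, hwz⟩ := hsrc.2
        apply hdst
        rw [Finset.mem_filter]
        refine ⟨Finset.mem_univ _, w ++ [e], pw_snoc P hw rfl, ?_⟩
        intro f hf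
        rw [List.mem_append] at hf
        rcases hf with hf | hf
        · exact hwz f hf
        · simp at hf
          subst hf
          exact ⟨hcrit, hx0⟩
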